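/- Suppose t, ν solve d(ν²)/dr = 6t, dt/dr = 1 - 2t²/ν² with t(0) = 0, ν(0) = ν₀ > 0, and both positive and defined for all r > 0 with ν(r) → ∞ as r → ∞. Then the ratio t(r)²/ν(r)² converges to 1/5 as r → ∞. -/

import Mathlib

open Set Filter

theorem spin7_asymptotic_ratio (t ν : ℝ → ℝ) (ν₀ : ℝ) (hν₀ : 0 < ν₀)
    (ht0 : t 0 = 0) (hν0 : ν 0 = ν₀)
    (hpos : ∀ r > 0, 0 < t r ∧ 0 < ν r)
    (h1 : ∀ r > 0, HasDerivAt (fun s => ν s ^ 2) (6 * t r) r)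
    (h2 : ∀ r > 0, HasDerivAt t (1 - 2 * t r ^ 2 / ν r ^ 2) r)
    (hinf : Tendsto ν atTop atTop) :
    Tendsto (fun r => t r ^ 2 / ν r ^ 2) atTop (nhds (1 / 5)) := by
  have hupos : ∀ r > 0, 0 < ν r ^ 2 := fun r hr => pow_pos (hpos r hr).2 2
  set f : ℝ → ℝ := fun r =>
    5 * t r ^ 2 * (ν r ^ 2) ^ ((2:ℝ)/3) - (ν r ^ 2) ^ ((5:ℝ)/3) with hf_def
  have hderiv : ∀ r > 0, HasDerivAt f 0 r := by
    intro r hr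
    have hu : HasDerivAt (fun s => ν s ^ 2) (6 * t r) r := h1 r hr
    have hu0 := hupos r hr
    have hune : ν r ^ 2 ≠ 0 := hu0.ne'
    have hA : HasDerivAt (fun s => (ν s ^ 2) ^ ((2:ℝ)/3))
        (6 * t r * ((2:ℝ)/3) * (ν r ^ 2) ^ ((2:ℝ)/3 - 1)) r :=
      hu.rpow_const (Or.inl hune)
    have hB : HasDerivAt (fun s => (ν s ^ 2) ^ ((5:ℝ)/3))
        (6 * t r * ((5:ℝ)/3) * (ν r ^ 2) ^ ((5:ℝ)/3 - 1)) r :=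
      hu.rpow_const (Or.inl hune)
    have ht2 : HasDerivAt (fun s => t s ^ 2)
        (2 * t r * (1 - 2 * t r ^ 2 / ν r ^ 2)) r := by
      simpa [mul_comm] using ((h2 r hr).fun_pow 2)
    have hD := ((ht2.const_mul (5:ℝ)).mul hA).sub hB
    convert (show HasDerivAt f _ r from hD) using 1
    have key : (ν r ^ 2) ^ ((2:ℝ)/3) = (ν r ^ 2) * (ν r ^ 2) ^ ((2:ℝ)/3 - 1) := by
      rw [← Real.rpow_one_add' hu0.le (by norm_num)]
      norm_num
    rw [show ((5:ℝ)/3 - 1) = (2:ℝ)/3 by norm_num, key]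
    have hνne : ν r ≠ 0 := (hpos r hr).2.ne'
    field_simp
    ring
  have hconst : ∀ r ≥ (1:ℝ), f r = f 1 := by
    intro r hr
    have hcont : ContinuousOn f (Icc 1 r) := fun x hx =>
      ((hderiv x (lt_of_lt_of_le one_pos hx.1)).continuousAt).continuousWithinAt
    exact constant_of_has_deriv_right_zero hcont
      (fun x hx => (hderiv x (lt_of_lt_of_le one_pos hx.1)).hasDerivWithinAt)
      r (right_mem_Icc.2 hr)
  have hratio : ∀ r ≥ (1:ℝ), t r ^ 2 / ν r ^ 2
      = 1/5 + f 1 / (5 * (ν r ^ 2) ^ ((5:ℝ)/3)) := by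
    intro r hr
    have hr0 : (0:ℝ) < r := lt_of_lt_of_le one_pos hr
    have hu0 := hupos r hr0
    rw [← hconst r hr]
    simp only [hf_def]
    have h53 : (ν r ^ 2) ^ ((5:ℝ)/3) = (ν r ^ 2) * (ν r ^ 2) ^ ((2:ℝ)/3) := by
      rw [← Real.rpow_one_add' hu0.le (by norm_num)]
      norm_num
    rw [h53]
    have h23 : (0:ℝ) < (ν r ^ 2) ^ ((2:ℝ)/3) := Real.rpow_pos_of_pos hu0 _
    have hνne : ν r ≠ 0 := (hpos r hr0).2.ne'
    field_simp
    ring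
  have huinf : Tendsto (fun r => (ν r ^ 2) ^ ((5:ℝ)/3)) atTop atTop :=
    (tendsto_rpow_atTop (by norm_num : (0:ℝ) < 5/3)).comp
      ((tendsto_pow_atTop two_ne_zero).comp hinf)
  have hC : Tendsto (fun r => f 1 / (5 * (ν r ^ 2) ^ ((5:ℝ)/3))) atTop (nhds 0) :=
    Tendsto.div_atTop tendsto_const_nhds (huinf.const_mul_atTop (by norm_num))
  have hlim : Tendsto (fun r => 1/5 + f 1 / (5 * (ν r ^ 2) ^ ((5:ℝ)/3)))
      atTop (nhds (1/5 + 0)) := tendsto_const_nhds.add hC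
  rw [add_zero] at hlim
  exact hlim.congr' ((eventually_ge_atTop 1).mono fun r hr => (hratio r hr).symm)
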